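/- Let n ≥ 1 and M > 0. For every ε > 0 there exists μ = μ(n, ε, M) ∈ (0, M) such that the following holds: for every σ ∈ ∂B₁ (a unit vector in ℝⁿ) and every M-Lipschitz function u : B₁ → ℝ for which there exists a sequence t_k ↘ 0 with |{x ∈ B₁ : x + t_k σ ∈ B₁ and u(x + t_k σ) − u(x) ≥ (M − μ) t_k}| ≥ (1 − μ)|B₁| for every k, one has |u(x) − u(0) − M σ·x| ≤ ε for every x ∈ B₁. -/

import Mathlib

open MeasureTheory Metric Set


lemma aux_norm_bound {E : Type*} [NormedAddCommGroup E] [InnerProductSpace ℝ E]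
    (σ w : E) (hσ : ‖σ‖ = 1) (hw : (inner ℝ σ w : ℝ) = 0) (c : ℝ) (hc : 0 < c) :
    ‖w + c • σ‖ ≤ c + ‖w‖ ^ 2 / (2 * c) := by
  have h1 : ‖w + c • σ‖ ^ 2 = ‖w‖ ^ 2 + c ^ 2 := by
    rw [norm_add_sq_real, real_inner_smul_right, real_inner_comm, hw, norm_smul, hσ]
    simp [abs_of_pos hc]
  have hr : 2 * c * (‖w‖ ^ 2 / (2 * c)) = ‖w‖ ^ 2 := by field_simp
  nlinarith [h1, hr, norm_nonneg (w + c • σ), sq_nonneg (‖w‖ ^ 2 / (2 * c)), hc.le,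
    div_nonneg (sq_nonneg ‖w‖) (by linarith : (0:ℝ) ≤ 2 * c)]

lemma aux_proj_bound {E : Type*} [NormedAddCommGroup E] [InnerProductSpace ℝ E]
    (σ v : E) (hσ : ‖σ‖ = 1) :
    ‖v - (inner ℝ σ v : ℝ) • σ‖ ^ 2 ≤ ‖v‖ ^ 2 := by
  set a := (inner ℝ σ v : ℝ) with ha
  have h1 : ‖v - a • σ‖ ^ 2 = ‖v‖ ^ 2 - 2 * (a * (inner ℝ v σ : ℝ)) + |a| ^ 2 := by
    rw [norm_sub_sq_real, real_inner_smul_right, norm_smul, Real.norm_eq_abs, hσ, mul_one]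
  have h2 : (inner ℝ v σ : ℝ) = a := real_inner_comm σ v
  rw [h2] at h1
  nlinarith [h1, sq_abs a, sq_nonneg a]


lemma exists_good_chain (n : ℕ) (hn : 1 ≤ n)
    (M μ t κ η : ℝ) (hM : 0 < M) (hμ0 : 0 < μ) (hμ1 : μ < 1) (ht : 0 < t)
    (hκ : 0 < κ) (hη : 0 < η)
    (σ : EuclideanSpace ℝ (Fin n)) (hσ : ‖σ‖ = 1)
    (u : EuclideanSpace ℝ (Fin n) → ℝ)
    (hLip : ∀ x ∈ ball (0 : EuclideanSpace ℝ (Fin n)) 1,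
         ∀ y ∈ ball (0 : EuclideanSpace ℝ (Fin n)) 1, |u x - u y| ≤ M * ‖x - y‖)
    (m : ℕ)
    (hA : ENNReal.ofReal (1 - μ) * volume (ball (0 : EuclideanSpace ℝ (Fin n)) 1) ≤
        volume {x ∈ ball (0 : EuclideanSpace ℝ (Fin n)) 1 |
          x + t • σ ∈ ball (0 : EuclideanSpace ℝ (Fin n)) 1 ∧
            (M - μ) * t ≤ u (x + t • σ) - u x})
    (hsmall : (m : ℝ) * t * ((1 + 2 * M) * μ) < κ * η ^ n)
    (c : EuclideanSpace ℝ (Fin n)) (hc : ‖c‖ + η + m * t < 1) :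
    ∃ y : EuclideanSpace ℝ (Fin n), ‖y - c‖ < η ∧ ‖y‖ + (m : ℝ) * t < 1 ∧
      M * ((m : ℝ) * t) - κ ≤ u (y + ((m : ℝ) * t) • σ) - u y := by
  haveI : NeZero n := ⟨by omega⟩
  set B : Set (EuclideanSpace ℝ (Fin n)) := ball 0 1 with hBdef
  have hBopen : IsOpen B := isOpen_ball
  set D : Set (EuclideanSpace ℝ (Fin n)) := B ∩ (fun x => x + t • σ) ⁻¹' B with hDdef
  have hDopen : IsOpen D := hBopen.inter (hBopen.preimage (continuous_id.add continuous_const))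
  have hDsub : D ⊆ B := inter_subset_left
  set A : Set (EuclideanSpace ℝ (Fin n)) :=
    {x ∈ B | x + t • σ ∈ B ∧ (M - μ) * t ≤ u (x + t • σ) - u x} with hAdef
  have hAD : A ⊆ D := fun x hx => ⟨hx.1, hx.2.1⟩
  have hAB : A ⊆ B := fun x hx => hx.1
  -- continuity of u on the ball
  have hu : ContinuousOn u B := by
    have : LipschitzOnWith (Real.toNNReal M) u B := by
      apply LipschitzOnWith.of_dist_le_mul
      intro x hx y hy
      rw [Real.dist_eq, dist_eq_norm, Real.coe_toNNReal _ hM.le]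
      exact hLip x hx y hy
    exact this.continuousOn
  have huD : ContinuousOn (fun x => u (x + t • σ) - u x) D := by
    apply ContinuousOn.sub
    · exact hu.comp ((continuous_id.add continuous_const).continuousOn) (fun x hx => hx.2)
    · exact hu.mono hDsub
  set g : EuclideanSpace ℝ (Fin n) → ℝ := fun x => M * t - (u (x + t • σ) - u x) with hgdef
  have hgc : ContinuousOn g D := continuousOn_const.sub huD
  set H : EuclideanSpace ℝ (Fin n) → ENNReal :=
    D.indicator (fun x => ENNReal.ofReal (g x)) with hHdef
  have hHmeas : AEMeasurable H volume := by
    rw [hHdef, aemeasurable_indicator_iff hDopen.measurableSet]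
    exact (ENNReal.continuous_ofReal.comp_continuousOn hgc).aemeasurable
      hDopen.measurableSet
  -- A is null measurable
  have hAnm : NullMeasurableSet A volume := by
    set F₀ : EuclideanSpace ℝ (Fin n) → ℝ :=
      D.indicator (fun x => (u (x + t • σ) - u x) - (M - μ) * t + 1) with hF₀
    have hF₀meas : AEMeasurable F₀ volume := by
      rw [hF₀, aemeasurable_indicator_iff hDopen.measurableSet]
      exact (ContinuousOn.add (huD.sub continuousOn_const) continuousOn_const).aemeasurable
        hDopen.measurableSet
    have hAeq : A = F₀ ⁻¹' (Set.Ici 1) := by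
      ext x
      constructor
      · rintro ⟨h1, h2, h3⟩
        have hxD : x ∈ D := ⟨h1, h2⟩
        have he : F₀ x = (u (x + t • σ) - u x) - (M - μ) * t + 1 :=
          Set.indicator_of_mem hxD _
        simp only [Set.mem_preimage, Set.mem_Ici, he]
        linarith
      · intro h
        simp only [Set.mem_preimage, Set.mem_Ici] at h
        by_cases hxD : x ∈ D
        · have he : F₀ x = (u (x + t • σ) - u x) - (M - μ) * t + 1 :=
            Set.indicator_of_mem hxD _
          rw [he] at h
          exact ⟨hxD.1, hxD.2, by linarith⟩
        · have he : F₀ x = 0 := Set.indicator_of_notMem hxD _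
          rw [he] at h; linarith
    rw [hAeq]
    exact hF₀meas.nullMeasurable measurableSet_Ici
  have hVfin : volume B ≠ ⊤ := measure_ball_lt_top.ne
  have hV0 : volume B ≠ 0 := (measure_ball_pos volume _ one_pos).ne'
  -- bound on the bad part of D
  have hDA : volume (D \ A) ≤ ENNReal.ofReal μ * volume B := by
    have h1 : volume (D \ A) + ENNReal.ofReal (1 - μ) * volume B ≤ volume B := by
      calc volume (D \ A) + ENNReal.ofReal (1 - μ) * volume B
          ≤ volume (D \ A) + volume A := add_le_add le_rfl hA
        _ = volume ((D \ A) ∪ A) :=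
            (measure_union₀ hAnm (Disjoint.aedisjoint disjoint_sdiff_left)).symm
        _ = volume (D ∪ A) := by rw [Set.diff_union_self]
        _ = volume D := by rw [Set.union_eq_self_of_subset_right hAD]
        _ ≤ volume B := measure_mono hDsub
    have h3 : volume B = ENNReal.ofReal μ * volume B + ENNReal.ofReal (1 - μ) * volume B := by
      rw [← add_mul, ← ENNReal.ofReal_add hμ0.le (by linarith)]
      norm_num
    exact (ENNReal.add_le_add_iff_right
      (ENNReal.mul_ne_top ENNReal.ofReal_ne_top hVfin)).mp (h1.trans h3.le)
  -- pointwise bound on H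
  have hHle : ∀ x, H x ≤ A.indicator (fun _ => ENNReal.ofReal (μ * t)) x
      + (D \ A).indicator (fun _ => ENNReal.ofReal (2 * M * t)) x := by
    intro x
    by_cases hxD : x ∈ D
    · by_cases hxA : x ∈ A
      · have h1 : g x ≤ μ * t := by
          have h4 := hxA.2.2
          simp only [hgdef]; nlinarith
        calc H x = ENNReal.ofReal (g x) := Set.indicator_of_mem hxD _
          _ ≤ ENNReal.ofReal (μ * t) := ENNReal.ofReal_le_ofReal h1
          _ = A.indicator (fun _ => ENNReal.ofReal (μ * t)) x :=
              (Set.indicator_of_mem hxA (fun _ => ENNReal.ofReal (μ * t))).symm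
          _ ≤ _ := le_self_add
      · have h1 : g x ≤ 2 * M * t := by
          have h2 := hLip (x + t • σ) hxD.2 x (hDsub hxD)
          have h3 : ‖x + t • σ - x‖ = t := by
            rw [add_sub_cancel_left, norm_smul, Real.norm_eq_abs, hσ, mul_one, abs_of_pos ht]
          rw [h3] at h2
          have h5 := (abs_le.mp h2).1
          simp only [hgdef]; nlinarith
        calc H x = ENNReal.ofReal (g x) := Set.indicator_of_mem hxD _
          _ ≤ ENNReal.ofReal (2 * M * t) := ENNReal.ofReal_le_ofReal h1
          _ = (D \ A).indicator (fun _ => ENNReal.ofReal (2 * M * t)) x := by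
              have hxDA : x ∈ D \ A := ⟨hxD, hxA⟩
              exact (Set.indicator_of_mem hxDA (fun _ => ENNReal.ofReal (2 * M * t))).symm
          _ ≤ _ := le_add_self
    · have he : H x = 0 := Set.indicator_of_notMem hxD _
      rw [he]
      exact bot_le
  -- integral bound on H
  have hint : ∫⁻ y, H y ≤ ENNReal.ofReal ((1 + 2 * M) * μ * t) * volume B := by
    calc ∫⁻ y, H y ≤ ∫⁻ y, (A.indicator (fun _ => ENNReal.ofReal (μ * t)) y
        + (D \ A).indicator (fun _ => ENNReal.ofReal (2 * M * t)) y) :=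
          lintegral_mono (fun y => hHle y)
      _ = ENNReal.ofReal (μ * t) * volume A + ENNReal.ofReal (2 * M * t) * volume (D \ A) := by
          rw [lintegral_add_left']
          · rw [lintegral_indicator_const₀ hAnm, lintegral_indicator_const₀
              (hDopen.measurableSet.nullMeasurableSet.diff hAnm)]
          · rw [aemeasurable_indicator_iff₀ hAnm]
            exact aemeasurable_const
      _ ≤ ENNReal.ofReal (μ * t) * volume B
          + ENNReal.ofReal (2 * M * t) * (ENNReal.ofReal μ * volume B) := by
          apply add_le_add
          · exact mul_le_mul_right (measure_mono hAB) _
          · exact mul_le_mul_right hDA _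
      _ = ENNReal.ofReal ((1 + 2 * M) * μ * t) * volume B := by
          rw [← mul_assoc, ← ENNReal.ofReal_mul (by positivity), ← add_mul,
            ← ENNReal.ofReal_add (by positivity) (by positivity)]
          ring_nf
  -- the m-step defect sum
  set F : EuclideanSpace ℝ (Fin n) → ENNReal :=
    fun y => ∑ j ∈ Finset.range m, H (y + ((j : ℝ) * t) • σ) with hFdef
  have hFmeas : AEMeasurable F volume := by
    apply Finset.aemeasurable_fun_sum
    intro j _
    exact hHmeas.comp_quasiMeasurePreserving (measurePreserving_add_right volume _).quasiMeasurePreserving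
  have hFint : ∫⁻ y, F y ≤ (m : ENNReal) * (ENNReal.ofReal ((1 + 2 * M) * μ * t) * volume B) := by
    calc ∫⁻ y, F y
        = ∑ j ∈ Finset.range m, ∫⁻ y, H (y + ((j : ℝ) * t) • σ) :=
          lintegral_finset_sum' (Finset.range m)
            (fun j _ => hHmeas.comp_quasiMeasurePreserving (measurePreserving_add_right volume _).quasiMeasurePreserving)
      _ = ∑ j ∈ Finset.range m, ∫⁻ y, H y :=
          Finset.sum_congr rfl (fun j _ => lintegral_add_right_eq_self H _)
      _ = (m : ENNReal) * ∫⁻ y, H y := by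
          rw [Finset.sum_const, Finset.card_range, nsmul_eq_mul]
      _ ≤ _ := mul_le_mul_right hint _
  have hball : volume (ball c η) = ENNReal.ofReal (η ^ n) * volume B := by
    rw [hBdef, Measure.addHaar_ball volume c hη.le]
    congr 2
    rw [finrank_euclideanSpace, Fintype.card_fin]
  have hstrict : ∫⁻ y, F y < ENNReal.ofReal κ * volume (ball c η) := by
    calc ∫⁻ y, F y ≤ (m : ENNReal) * (ENNReal.ofReal ((1 + 2 * M) * μ * t) * volume B) := hFint
      _ = ENNReal.ofReal ((m : ℝ) * t * ((1 + 2 * M) * μ)) * volume B := by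
          rw [← ENNReal.ofReal_natCast, ← mul_assoc, ← ENNReal.ofReal_mul (by positivity)]
          ring_nf
      _ < ENNReal.ofReal (κ * η ^ n) * volume B := by
          apply ENNReal.mul_lt_mul_left hV0 hVfin
          exact (ENNReal.ofReal_lt_ofReal_iff (by positivity)).mpr hsmall
      _ = ENNReal.ofReal κ * volume (ball c η) := by
          rw [hball, ENNReal.ofReal_mul hκ.le, mul_assoc]
  have hgood : ∃ y ∈ ball c η, F y < ENNReal.ofReal κ := by
    by_contra hcon
    push_neg at hcon
    have hsub : ball c η ⊆ {y | ENNReal.ofReal κ ≤ F y} := fun y hy => hcon y hy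
    have h1 : ENNReal.ofReal κ * volume (ball c η)
        ≤ ENNReal.ofReal κ * volume {y | ENNReal.ofReal κ ≤ F y} :=
      mul_le_mul_right (measure_mono hsub) _
    have h2 := mul_meas_ge_le_lintegral₀ hFmeas (ENNReal.ofReal κ)
    exact absurd ((h1.trans h2).trans_lt hstrict) (lt_irrefl _)
  obtain ⟨y, hyc, hyF⟩ := hgood
  have hycn : ‖y - c‖ < η := mem_ball_iff_norm.mp hyc
  have hyn : ‖y‖ < ‖c‖ + η := by
    calc ‖y‖ = ‖y - c + c‖ := by rw [sub_add_cancel]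
      _ ≤ ‖y - c‖ + ‖c‖ := norm_add_le _ _
      _ < η + ‖c‖ := by linarith
      _ = ‖c‖ + η := by ring
  have hymt : ‖y‖ + (m : ℝ) * t < 1 := by linarith
  have hjB : ∀ j : ℕ, j ≤ m → y + ((j : ℝ) * t) • σ ∈ B := by
    intro j hj
    rw [hBdef, mem_ball_iff_norm, sub_zero]
    have hjm : (j : ℝ) ≤ (m : ℝ) := Nat.cast_le.mpr hj
    calc ‖y + ((j : ℝ) * t) • σ‖ ≤ ‖y‖ + ‖((j : ℝ) * t) • σ‖ := norm_add_le _ _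
      _ = ‖y‖ + (j : ℝ) * t := by
          rw [norm_smul, Real.norm_eq_abs, hσ, mul_one, abs_of_nonneg (by positivity)]
      _ ≤ ‖y‖ + (m : ℝ) * t := by nlinarith
      _ < 1 := hymt
  have hjD : ∀ j : ℕ, j < m → y + ((j : ℝ) * t) • σ ∈ D := by
    intro j hj
    refine ⟨hjB j hj.le, ?_⟩
    have he : y + ((j : ℝ) * t) • σ + t • σ = y + (((j + 1 : ℕ) : ℝ) * t) • σ := by
      push_cast
      rw [add_assoc, ← add_smul]
      ring_nf
    show y + ((j : ℝ) * t) • σ + t • σ ∈ B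
    rw [he]
    exact hjB (j + 1) hj
  have hgnn : ∀ j ∈ Finset.range m, 0 ≤ g (y + ((j : ℝ) * t) • σ) := by
    intro j hj
    have hjm := Finset.mem_range.mp hj
    have hD := hjD j hjm
    have h2 := hLip (y + ((j : ℝ) * t) • σ + t • σ) hD.2 (y + ((j : ℝ) * t) • σ) hD.1
    have h3 : ‖y + ((j : ℝ) * t) • σ + t • σ - (y + ((j : ℝ) * t) • σ)‖ = t := by
      rw [add_sub_cancel_left, norm_smul, Real.norm_eq_abs, hσ, mul_one, abs_of_pos ht]
    rw [h3] at h2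
    have h4 := (abs_le.mp h2).2
    simp only [hgdef]
    linarith
  have hgsum : ∑ j ∈ Finset.range m, g (y + ((j : ℝ) * t) • σ) ≤ κ := by
    have h1 : F y = ∑ j ∈ Finset.range m, ENNReal.ofReal (g (y + ((j : ℝ) * t) • σ)) :=
      Finset.sum_congr rfl
        (fun j hj => Set.indicator_of_mem (hjD j (Finset.mem_range.mp hj)) _)
    rw [h1, ← ENNReal.ofReal_sum_of_nonneg hgnn] at hyF
    exact ((ENNReal.ofReal_lt_ofReal_iff_of_nonneg (Finset.sum_nonneg hgnn)).mp hyF).le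
  have h0 : ∀ j : ℕ, u (y + (((j + 1 : ℕ) : ℝ) * t) • σ) - u (y + ((j : ℝ) * t) • σ)
      = M * t - g (y + ((j : ℝ) * t) • σ) := by
    intro j
    have he : y + ((j : ℝ) * t) • σ + t • σ = y + (((j + 1 : ℕ) : ℝ) * t) • σ := by
      push_cast
      rw [add_assoc, ← add_smul]
      ring_nf
    simp only [hgdef]
    rw [← he]
    ring
  have hts := Finset.sum_range_sub (fun i : ℕ => u (y + ((i : ℝ) * t) • σ)) m
  simp only [Nat.cast_zero, zero_mul, zero_smul, add_zero] at hts
  have htel : u (y + ((m : ℝ) * t) • σ) - u y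
      = M * ((m : ℝ) * t) - ∑ j ∈ Finset.range m, g (y + ((j : ℝ) * t) • σ) := by
    rw [← hts]
    calc ∑ j ∈ Finset.range m,
          (u (y + (((j + 1 : ℕ) : ℝ) * t) • σ) - u (y + ((j : ℝ) * t) • σ))
        = ∑ j ∈ Finset.range m, (M * t - g (y + ((j : ℝ) * t) • σ)) :=
          Finset.sum_congr rfl (fun j _ => h0 j)
      _ = M * ((m : ℝ) * t) - ∑ j ∈ Finset.range m, g (y + ((j : ℝ) * t) • σ) := by
          rw [Finset.sum_sub_distrib, Finset.sum_const, Finset.card_range, nsmul_eq_mul]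
          ring
  exact ⟨y, hycn, hymt, by linarith⟩


lemma step_lower (n : ℕ)
    (M η κ L d : ℝ) (hM : 0 < M) (hη : 0 < η) (hL : 0 < L) (hd : 0 < d)
    (σ : EuclideanSpace ℝ (Fin n)) (hσ : ‖σ‖ = 1)
    (u : EuclideanSpace ℝ (Fin n) → ℝ)
    (hLip : ∀ x ∈ ball (0 : EuclideanSpace ℝ (Fin n)) 1,
         ∀ y ∈ ball (0 : EuclideanSpace ℝ (Fin n)) 1, |u x - u y| ≤ M * ‖x - y‖)
    (hchain : ∀ c : EuclideanSpace ℝ (Fin n), ‖c‖ + η + L < 1 →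
      ∃ y : EuclideanSpace ℝ (Fin n), ‖y - c‖ < η ∧ ‖y‖ + L < 1 ∧
        M * L - κ ≤ u (y + L • σ) - u y)
    (p q : EuclideanSpace ℝ (Fin n)) (hp : ‖p‖ + η + L < 1) (hq : ‖q‖ < 1)
    (hdα : d ≤ L - (inner ℝ σ (q - p) : ℝ)) :
    M * (inner ℝ σ (q - p) : ℝ) - (κ + 2 * M * η + M * ‖q - p‖ ^ 2 / (2 * d))
      ≤ u q - u p := by
  obtain ⟨y, hyc, hyL, hygrow⟩ := hchain p hp
  set α : ℝ := (inner ℝ σ (q - p) : ℝ) with hα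
  set w : EuclideanSpace ℝ (Fin n) := (q - p) - α • σ with hw
  have hαL : 0 < L - α := lt_of_lt_of_le hd hdα
  -- memberships
  have hpB : p ∈ ball (0 : EuclideanSpace ℝ (Fin n)) 1 := by
    rw [mem_ball_iff_norm, sub_zero]; linarith
  have hqB : q ∈ ball (0 : EuclideanSpace ℝ (Fin n)) 1 := by
    rw [mem_ball_iff_norm, sub_zero]; linarith
  have hyn : ‖y‖ < 1 := by linarith
  have hyB : y ∈ ball (0 : EuclideanSpace ℝ (Fin n)) 1 := by
    rw [mem_ball_iff_norm, sub_zero]; exact hyn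
  have hyLB : y + L • σ ∈ ball (0 : EuclideanSpace ℝ (Fin n)) 1 := by
    rw [mem_ball_iff_norm, sub_zero]
    calc ‖y + L • σ‖ ≤ ‖y‖ + ‖L • σ‖ := norm_add_le _ _
      _ = ‖y‖ + L := by
          rw [norm_smul, Real.norm_eq_abs, hσ, mul_one, abs_of_pos hL]
      _ < 1 := hyL
  -- Lipschitz pieces
  have e1 := hLip y hyB p hpB
  have e3 := hLip q hqB (y + L • σ) hyLB
  -- orthogonality
  have hwperp : (inner ℝ σ w : ℝ) = 0 := by
    rw [hw, inner_sub_right, real_inner_smul_right, real_inner_self_eq_norm_sq, hσ]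
    simp [hα]
  have hwneg : (inner ℝ σ (-w) : ℝ) = 0 := by rw [inner_neg_right, hwperp, neg_zero]
  -- geometric estimate
  have hgeom : ‖q - p - L • σ‖ ≤ (L - α) + ‖q - p‖ ^ 2 / (2 * d) := by
    have he : q - p - L • σ = -(-w + (L - α) • σ) := by
      rw [hw]
      module
    have h1 : ‖q - p - L • σ‖ ≤ (L - α) + ‖-w‖ ^ 2 / (2 * (L - α)) := by
      rw [he, norm_neg]
      exact aux_norm_bound σ (-w) hσ hwneg (L - α) hαL
    have h2 : ‖-w‖ ^ 2 ≤ ‖q - p‖ ^ 2 := by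
      rw [norm_neg, hw, hα]
      exact aux_proj_bound σ (q - p) hσ
    have h3 : ‖q - p‖ ^ 2 / (2 * (L - α)) ≤ ‖q - p‖ ^ 2 / (2 * d) :=
      div_le_div_of_nonneg_left (sq_nonneg _) (by linarith) (by linarith)
    have h4 : ‖-w‖ ^ 2 / (2 * (L - α)) ≤ ‖q - p‖ ^ 2 / (2 * (L - α)) :=
      (div_le_div_iff_of_pos_right (by linarith)).mpr h2
    linarith
  -- distance from q to the chain endpoint
  have hpy : ‖p - y‖ ≤ η := by
    have : p - y = -(y - p) := by abel
    rw [this, norm_neg]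
    exact hyc.le
  have hqy : ‖q - (y + L • σ)‖ ≤ (L - α) + ‖q - p‖ ^ 2 / (2 * d) + η := by
    have h4 : q - (y + L • σ) = (q - p - L • σ) + (p - y) := by abel
    calc ‖q - (y + L • σ)‖ = ‖(q - p - L • σ) + (p - y)‖ := by rw [h4]
      _ ≤ ‖q - p - L • σ‖ + ‖p - y‖ := norm_add_le _ _
      _ ≤ ((L - α) + ‖q - p‖ ^ 2 / (2 * d)) + η := add_le_add hgeom hpy
  have k3 : |u q - u (y + L • σ)| ≤ M * ((L - α) + ‖q - p‖ ^ 2 / (2 * d) + η) :=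
    e3.trans (mul_le_mul_of_nonneg_left hqy hM.le)
  have k1 : |u y - u p| ≤ M * η := by
    have h5 : ‖y - p‖ ≤ η := hyc.le
    exact e1.trans (mul_le_mul_of_nonneg_left h5 hM.le)
  have hk3 := abs_le.mp k3
  have hk1 := abs_le.mp k1
  have hexp : M * ((L - α) + ‖q - p‖ ^ 2 / (2 * d) + η)
      = M * L - M * α + M * (‖q - p‖ ^ 2 / (2 * d)) + M * η := by ring
  have hexp2 : M * ‖q - p‖ ^ 2 / (2 * d) = M * (‖q - p‖ ^ 2 / (2 * d)) := by ring
  rw [hexp2]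
  linarith [hk3.1, hk3.2, hk1.1, hk1.2, hygrow, hexp]


set_option maxHeartbeats 1000000 in
/-- **Near-maximal growth at many points forces closeness to an affine map.**
Let `n ≥ 1` and `M > 0`. For every `ε > 0` there is `μ = μ(n,ε,M) ∈ (0,M)` such that the
following holds: for every unit vector `σ ∈ ∂B₁ ⊆ ℝⁿ` and every `M`-Lipschitz function
`u : B₁ → ℝ` for which there is a sequence `t k ↘ 0` with
`|{x ∈ B₁ : x + t k • σ ∈ B₁ and u(x + t k σ) - u(x) ≥ (M - μ) t k}| ≥ (1 - μ)|B₁|`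
for every `k`, one has `|u(x) - u(0) - M σ·x| ≤ ε` for every `x ∈ B₁`. -/
theorem almost_affine_of_near_maximal_growth
    (n : ℕ) (hn : 1 ≤ n) (M : ℝ) (hM : 0 < M) (ε : ℝ) (hε : 0 < ε) :
    ∃ μ : ℝ, μ ∈ Set.Ioo 0 M ∧
      ∀ σ : EuclideanSpace ℝ (Fin n), ‖σ‖ = 1 →
      ∀ u : EuclideanSpace ℝ (Fin n) → ℝ,
        (∀ x ∈ Metric.ball (0 : EuclideanSpace ℝ (Fin n)) 1,
          ∀ y ∈ Metric.ball (0 : EuclideanSpace ℝ (Fin n)) 1,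
            |u x - u y| ≤ M * ‖x - y‖) →
      ∀ t : ℕ → ℝ, (∀ k, 0 < t k) → StrictAnti t →
        Filter.Tendsto t Filter.atTop (nhds 0) →
        (∀ k, ENNReal.ofReal (1 - μ) *
            volume (Metric.ball (0 : EuclideanSpace ℝ (Fin n)) 1) ≤
          volume {x ∈ Metric.ball (0 : EuclideanSpace ℝ (Fin n)) 1 |
            x + t k • σ ∈ Metric.ball (0 : EuclideanSpace ℝ (Fin n)) 1 ∧
              (M - μ) * t k ≤ u (x + t k • σ) - u x}) →
        ∀ x ∈ Metric.ball (0 : EuclideanSpace ℝ (Fin n)) 1,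
          |u x - u 0 - M * (inner ℝ σ x : ℝ)| ≤ ε := by
  -- constants
  have h16M : (0:ℝ) < 16 * M := by linarith
  set L : ℝ := min (ε / (16 * M)) 8⁻¹ with hLdef
  have hL0 : 0 < L := lt_min (div_pos hε h16M) (by norm_num)
  have hLε : L ≤ ε / (16 * M) := min_le_left _ _
  have hL8 : L ≤ 8⁻¹ := min_le_right _ _
  set N : ℕ := ⌈4 / L + 16 * M / (ε * L)⌉₊ with hNdef
  have hNpos : 0 < N := Nat.ceil_pos.mpr
    (add_pos (div_pos (by norm_num) hL0) (div_pos h16M (mul_pos hε hL0)))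
  have hNR : 4 / L + 16 * M / (ε * L) ≤ (N : ℝ) := Nat.le_ceil _
  have hN0' : (0 : ℝ) < N := Nat.cast_pos.mpr hNpos
  have hNne : (N : ℝ) ≠ 0 := hN0'.ne'
  have hN1 : (1 : ℝ) ≤ N := by exact_mod_cast hNpos
  have hN4 : 4 / L ≤ (N : ℝ) :=
    le_trans (le_add_of_nonneg_right (div_pos h16M (mul_pos hε hL0)).le) hNR
  have hN16 : 16 * M / (ε * L) ≤ (N : ℝ) :=
    le_trans (le_add_of_nonneg_left (div_pos (by norm_num) hL0).le) hNR
  have h48MN : (0:ℝ) < 48 * M * N := by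
    have := mul_pos (mul_pos (by norm_num : (0:ℝ) < 48) hM) hN0'
    linarith [this]
  set η : ℝ := min (ε / (48 * M * N)) 8⁻¹ with hηdef
  have hη0 : 0 < η := lt_min (div_pos hε h48MN) (by norm_num)
  have hηε : η ≤ ε / (48 * M * N) := min_le_left _ _
  have hη8 : η ≤ 8⁻¹ := min_le_right _ _
  set κ : ℝ := ε / (8 * N) with hκdef
  have hκ0 : 0 < κ := div_pos hε (mul_pos (by norm_num) hN0')
  set Q : ℝ := 1 + 4 * L * (1 + 2 * M) with hQdef
  have hQ0 : 0 < Q := by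
    have h12 : (0:ℝ) < 1 + 2 * M := by linarith
    have := mul_pos (mul_pos (by norm_num : (0:ℝ) < 4) hL0) h12
    rw [hQdef]; linarith [this]
  have hP0' : (0 : ℝ) < κ * η ^ n := mul_pos hκ0 (pow_pos hη0 n)
  have hR0 : (0 : ℝ) < κ * η ^ n / Q := div_pos hP0' hQ0
  set μ : ℝ := min (M / 2) (min 2⁻¹ (κ * η ^ n / Q)) with hμdef
  have hμ0 : 0 < μ := lt_min (by linarith) (lt_min (by norm_num) hR0)
  have hμM : μ < M := lt_of_le_of_lt (min_le_left _ _) (by linarith)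
  have hμ1 : μ < 1 := lt_of_le_of_lt (le_trans (min_le_right _ _) (min_le_left _ _)) (by norm_num)
  have hμQ : μ ≤ κ * η ^ n / Q := le_trans (min_le_right _ _) (min_le_right _ _)
  refine ⟨μ, ⟨hμ0, hμM⟩, ?_⟩
  intro σ hσ u hLip t htpos htanti htlim hvol x hx
  -- choose a small time step
  obtain ⟨k, htk⟩ : ∃ k, t k < L := (htlim.eventually (gt_mem_nhds hL0)).exists
  set tk : ℝ := t k with htkdef
  have htk0 : 0 < tk := htpos k
  set m : ℕ := ⌈L / tk⌉₊ with hmdef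
  have hm1 : L ≤ (m : ℝ) * tk := by
    have h := Nat.le_ceil (L / tk)
    rw [div_le_iff₀ htk0] at h
    exact h
  have hm2 : (m : ℝ) * tk ≤ 2 * L := by
    have h2 : (m : ℝ) < L / tk + 1 := Nat.ceil_lt_add_one (le_of_lt (div_pos hL0 htk0))
    have h3 := mul_lt_mul_of_pos_right h2 htk0
    rw [add_mul, div_mul_cancel₀ _ htk0.ne', one_mul] at h3
    linarith
  set Λ : ℝ := (m : ℝ) * tk with hΛdef
  have hΛ0 : 0 < Λ := lt_of_lt_of_le hL0 hm1
  -- smallness for chains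
  have hsmall : (m : ℝ) * tk * ((1 + 2 * M) * μ) < κ * η ^ n := by
    have hRQ : κ * η ^ n / Q * Q = κ * η ^ n := div_mul_cancel₀ _ hQ0.ne'
    have h12 : (0:ℝ) ≤ 1 + 2 * M := by linarith
    have h1 : (m : ℝ) * tk * (1 + 2 * M) ≤ 2 * L * (1 + 2 * M) :=
      mul_le_mul_of_nonneg_right hm2 h12
    have h1' : (0:ℝ) ≤ 2 * L * (1 + 2 * M) := by
      have := mul_nonneg (mul_nonneg (by norm_num : (0:ℝ) ≤ 2) hL0.le) h12
      linarith [this]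
    have h2 : (m : ℝ) * tk * ((1 + 2 * M) * μ) ≤ 2 * L * (1 + 2 * M) * (κ * η ^ n / Q) := by
      calc (m : ℝ) * tk * ((1 + 2 * M) * μ) = ((m : ℝ) * tk * (1 + 2 * M)) * μ := by ring
        _ ≤ 2 * L * (1 + 2 * M) * (κ * η ^ n / Q) := mul_le_mul h1 hμQ hμ0.le h1'
    have h3 : 2 * L * (1 + 2 * M) < Q := by
      have hX : (0:ℝ) < L * (1 + 2 * M) := mul_pos hL0 (by linarith)
      rw [hQdef]; linarith [hX]
    have h4 := mul_lt_mul_of_pos_right h3 hR0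
    linarith [h2, h4, hRQ]
  -- the chain oracle
  have hchain : ∀ c : EuclideanSpace ℝ (Fin n), ‖c‖ + η + Λ < 1 →
      ∃ y : EuclideanSpace ℝ (Fin n), ‖y - c‖ < η ∧ ‖y‖ + Λ < 1 ∧
        M * Λ - κ ≤ u (y + Λ • σ) - u y := by
    intro c hc
    exact exists_good_chain n hn M μ tk κ η hM hμ0 hμ1 htk0 hκ0 hη0 σ hσ u hLip m
      (hvol k) hsmall c hc
  -- geometry of the polygonal path
  have hxn : ‖x‖ < 1 := mem_ball_zero_iff.mp hx
  set s : ℝ := 1 - 2 * L - 2 * η with hsdef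
  have hs0 : (0 : ℝ) < s := by
    rw [hsdef]; have h1 := hL8; have h2 := hη8; norm_num at h1 h2 ⊢; linarith
  have hs1 : s ≤ 1 := by rw [hsdef]; linarith
  set x' : EuclideanSpace ℝ (Fin n) := s • x with hx'def
  have hx'n : ‖x'‖ = s * ‖x‖ := by
    rw [hx'def, norm_smul, Real.norm_eq_abs, abs_of_pos hs0]
  have hx's : ‖x'‖ < s := by
    rw [hx'n]
    calc s * ‖x‖ < s * 1 := mul_lt_mul_of_pos_left hxn hs0
      _ = s := mul_one _
  set P : ℕ → EuclideanSpace ℝ (Fin n) := fun j => ((j : ℝ) / (N : ℝ)) • x' with hPdef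
  set v : EuclideanSpace ℝ (Fin n) := (N : ℝ)⁻¹ • x' with hvdef
  have hPd : ∀ j : ℕ, P (j + 1) = P j + v := by
    intro j
    rw [hPdef, hvdef]
    simp only
    rw [← add_smul]
    congr 1
    push_cast
    rw [inv_eq_one_div, ← add_div]
  have hvN : ‖v‖ ≤ (N : ℝ)⁻¹ := by
    rw [hvdef, norm_smul, Real.norm_eq_abs, abs_of_pos (inv_pos.mpr hN0')]
    calc (N:ℝ)⁻¹ * ‖x'‖ ≤ (N:ℝ)⁻¹ * 1 := by
          apply mul_le_mul_of_nonneg_left _ (inv_pos.mpr hN0').le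
          linarith [hx's, hs1]
      _ = (N:ℝ)⁻¹ := mul_one _
  have hNL4 : (4 : ℝ) ≤ (N : ℝ) * L := by
    rw [div_le_iff₀ hL0] at hN4
    linarith
  have hinvN : (N : ℝ)⁻¹ ≤ L / 4 := by
    rw [inv_eq_one_div, div_le_div_iff₀ hN0' (by norm_num)]
    linarith
  have hvL : ‖v‖ ≤ L / 4 := hvN.trans hinvN
  have hαv : |(inner ℝ σ v : ℝ)| ≤ L / 4 := by
    calc |(inner ℝ σ v : ℝ)| ≤ ‖σ‖ * ‖v‖ := abs_real_inner_le_norm σ v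
      _ = ‖v‖ := by rw [hσ, one_mul]
      _ ≤ L / 4 := hvL
  have hPnorm : ∀ j : ℕ, j ≤ N → ‖P j‖ < s := by
    intro j hj
    rw [hPdef]
    simp only
    rw [norm_smul, Real.norm_eq_abs, abs_of_nonneg (by positivity)]
    have hj1 : (j : ℝ) / N ≤ 1 := by
      rw [div_le_one hN0']
      exact_mod_cast hj
    calc (j : ℝ) / N * ‖x'‖ ≤ 1 * ‖x'‖ :=
          mul_le_mul_of_nonneg_right hj1 (norm_nonneg _)
      _ = ‖x'‖ := one_mul _
      _ < s := hx's
  -- per-step two-sided estimate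
  obtain ⟨SE, hSEdef⟩ : ∃ SE : ℝ, SE = κ + 2 * M * η + M * ((N : ℝ)⁻¹) ^ 2 / L := ⟨_, rfl⟩
  have hstep : ∀ j : ℕ, j + 1 ≤ N →
      |u (P (j + 1)) - u (P j) - M * (inner ℝ σ v : ℝ)| ≤ SE := by
    intro j hj
    have hpj : ‖P j‖ < s := hPnorm j (by omega)
    have hpj1 : ‖P (j + 1)‖ < s := hPnorm (j + 1) hj
    have hΛ2 : Λ ≤ 2 * L := hm2
    have hps : ∀ z : EuclideanSpace ℝ (Fin n), ‖z‖ < s → ‖z‖ + η + Λ < 1 := by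
      intro z hz
      rw [hsdef] at hz
      linarith
    have hq1 : ‖P (j + 1)‖ < 1 := by
      have := hps _ hpj1; linarith
    have hq0 : ‖P j‖ < 1 := by
      have := hps _ hpj; linarith
    have hvsub : P (j + 1) - P j = v := by rw [hPd j]; abel
    have hvsub' : P j - P (j + 1) = -v := by rw [hPd j]; abel
    have hL2 : (0:ℝ) < L / 2 := by linarith
    have hd1 : L / 2 ≤ Λ - (inner ℝ σ (P (j + 1) - P j) : ℝ) := by
      rw [hvsub]
      have := (abs_le.mp hαv).2
      linarith
    have hd2 : L / 2 ≤ Λ - (inner ℝ σ (P j - P (j + 1)) : ℝ) := by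
      rw [hvsub', inner_neg_right]
      have := (abs_le.mp hαv).1
      linarith
    have low1 := step_lower n M η κ Λ (L / 2) hM hη0 hΛ0 hL2 σ hσ u hLip hchain
      (P j) (P (j + 1)) (hps _ hpj) hq1 hd1
    have low2 := step_lower n M η κ Λ (L / 2) hM hη0 hΛ0 hL2 σ hσ u hLip hchain
      (P (j + 1)) (P j) (hps _ hpj1) hq0 hd2
    rw [hvsub] at low1
    rw [hvsub'] at low2
    rw [inner_neg_right, norm_neg] at low2
    have herr : M * ‖v‖ ^ 2 / (2 * (L / 2)) ≤ M * ((N : ℝ)⁻¹) ^ 2 / L := by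
      have h2L : (2 : ℝ) * (L / 2) = L := by ring
      rw [h2L]
      have hnum : M * ‖v‖ ^ 2 ≤ M * ((N : ℝ)⁻¹) ^ 2 :=
        mul_le_mul_of_nonneg_left (pow_le_pow_left₀ (norm_nonneg v) hvN 2) hM.le
      exact (div_le_div_iff_of_pos_right hL0).mpr hnum
    rw [abs_le]
    constructor
    · linarith [low1, herr, hSEdef]
    · linarith [low2, herr, hSEdef]
  -- telescoping
  have hP0 : P 0 = 0 := by
    rw [hPdef]
    simp
  have hkey : ∀ j : ℕ, j ≤ N →
      |u (P j) - u 0 - M * (inner ℝ σ (P j) : ℝ)| ≤ (j : ℝ) * SE := by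
    intro j
    induction j with
    | zero =>
        intro _
        rw [hP0]
        simp
    | succ j ih =>
        intro hj
        have ihj := ih (by omega)
        have hst := hstep j hj
        have hPs : P (j + 1) = P j + v := hPd j
        have hin : (inner ℝ σ (P (j + 1)) : ℝ) = (inner ℝ σ (P j) : ℝ) + (inner ℝ σ v : ℝ) := by
          rw [hPs, inner_add_right]
        have heq : u (P (j + 1)) - u 0 - M * (inner ℝ σ (P (j + 1)) : ℝ)
            = (u (P (j + 1)) - u (P j) - M * (inner ℝ σ v : ℝ))
              + (u (P j) - u 0 - M * (inner ℝ σ (P j) : ℝ)) := by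
          rw [hin]; ring
        calc |u (P (j + 1)) - u 0 - M * (inner ℝ σ (P (j + 1)) : ℝ)|
            ≤ |u (P (j + 1)) - u (P j) - M * (inner ℝ σ v : ℝ)|
              + |u (P j) - u 0 - M * (inner ℝ σ (P j) : ℝ)| := by
              rw [heq]; exact abs_add_le _ _
          _ ≤ SE + (j : ℝ) * SE := add_le_add hst ihj
          _ = ((j + 1 : ℕ) : ℝ) * SE := by push_cast; ring
  have hPN : P N = x' := by
    rw [hPdef]
    simp only
    rw [div_self hNne]
    simp
  have hfin1 : |u x' - u 0 - M * (inner ℝ σ x' : ℝ)| ≤ (N : ℝ) * SE := by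
    have := hkey N le_rfl
    rwa [hPN] at this
  -- compare x and x'
  have h1s : 1 - s = 2 * L + 2 * η := by rw [hsdef]; ring
  have hxx' : ‖x - x'‖ ≤ 2 * L + 2 * η := by
    have h1 : x - x' = (1 - s) • x := by rw [hx'def]; module
    rw [h1, norm_smul, Real.norm_eq_abs, abs_of_nonneg (by rw [h1s]; linarith), h1s]
    exact mul_le_of_le_one_right (by linarith) hxn.le
  have hx'B : x' ∈ ball (0 : EuclideanSpace ℝ (Fin n)) 1 :=
    mem_ball_zero_iff.mpr (lt_of_lt_of_le hx's (by linarith))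
  have hux : |u x - u x'| ≤ M * (2 * L + 2 * η) :=
    (hLip x hx x' hx'B).trans (mul_le_mul_of_nonneg_left hxx' hM.le)
  have hinx : |(inner ℝ σ x : ℝ) - (inner ℝ σ x' : ℝ)| ≤ 2 * L + 2 * η := by
    rw [← inner_sub_right]
    calc |(inner ℝ σ (x - x') : ℝ)| ≤ ‖σ‖ * ‖x - x'‖ := abs_real_inner_le_norm _ _
      _ = ‖x - x'‖ := by rw [hσ, one_mul]
      _ ≤ 2 * L + 2 * η := hxx'
  -- numeric bounds
  have hML : M * L ≤ ε / 16 := by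
    rw [le_div_iff₀ h16M] at hLε
    linarith
  have hMη : M * η ≤ ε / 48 := by
    calc M * η ≤ M * (ε / (48 * M * N)) := mul_le_mul_of_nonneg_left hηε hM.le
      _ = ε / (48 * N) := by
          field_simp
      _ ≤ ε / 48 := div_le_div_of_nonneg_left hε.le (by norm_num) (by linarith)
  have hMNη : M * (N : ℝ) * η ≤ ε / 48 := by
    calc M * (N : ℝ) * η ≤ M * (N : ℝ) * (ε / (48 * M * N)) :=
          mul_le_mul_of_nonneg_left hηε (by positivity)
      _ = ε / 48 := by
          field_simp
  have hNκ : (N : ℝ) * κ = ε / 8 := by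
    rw [hκdef]
    field_simp
  have hMNL : M / ((N : ℝ) * L) ≤ ε / 16 := by
    rw [div_le_iff₀ (mul_pos hε hL0)] at hN16
    rw [div_le_div_iff₀ (mul_pos hN0' hL0) (by norm_num)]
    linarith [hN16]
  have hNSE : (N : ℝ) * SE ≤ ε / 8 + ε / 24 + ε / 16 := by
    have hfe : (N : ℝ) * (M * ((N : ℝ)⁻¹) ^ 2 / L) = M / ((N : ℝ) * L) := by
      field_simp
    have hexp : (N : ℝ) * SE
        = (N : ℝ) * κ + 2 * (M * (N : ℝ) * η) + (N : ℝ) * (M * ((N : ℝ)⁻¹) ^ 2 / L) := by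
      rw [hSEdef]; ring
    rw [hexp, hNκ, hfe]
    linarith [hMNη, hMNL]
  -- final triangle inequality
  have hsplit : u x - u 0 - M * (inner ℝ σ x : ℝ)
      = (u x - u x') + (u x' - u 0 - M * (inner ℝ σ x' : ℝ))
        - M * ((inner ℝ σ x : ℝ) - (inner ℝ σ x' : ℝ)) := by ring
  calc |u x - u 0 - M * (inner ℝ σ x : ℝ)|
      ≤ |u x - u x'| + |u x' - u 0 - M * (inner ℝ σ x' : ℝ)|
        + M * |(inner ℝ σ x : ℝ) - (inner ℝ σ x' : ℝ)| := by
        rw [hsplit]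
        calc |(u x - u x') + (u x' - u 0 - M * (inner ℝ σ x' : ℝ))
              - M * ((inner ℝ σ x : ℝ) - (inner ℝ σ x' : ℝ))|
            ≤ |(u x - u x') + (u x' - u 0 - M * (inner ℝ σ x' : ℝ))|
              + |M * ((inner ℝ σ x : ℝ) - (inner ℝ σ x' : ℝ))| := abs_sub _ _
          _ ≤ |u x - u x'| + |u x' - u 0 - M * (inner ℝ σ x' : ℝ)|
              + M * |(inner ℝ σ x : ℝ) - (inner ℝ σ x' : ℝ)| := by
              rw [abs_mul, abs_of_pos hM]
              linarith [abs_add_le (u x - u x') (u x' - u 0 - M * (inner ℝ σ x' : ℝ))]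
    _ ≤ M * (2 * L + 2 * η) + (N : ℝ) * SE + M * (2 * L + 2 * η) := by
        have hin2 := mul_le_mul_of_nonneg_left hinx hM.le
        linarith [hux, hfin1, hin2]
    _ ≤ ε := by
        have hexp2 : M * (2 * L + 2 * η) = 2 * (M * L) + 2 * (M * η) := by ring
        rw [hexp2]
        linarith [hML, hMη, hNSE]
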